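/- The matrix equation AX - YB = C has a solution pair (X, Y) if and only if the block matrices [[A, C], [0, B]] and [[A, 0], [0, B]] are equivalent. -/

import Mathlib

open Matrix

section RothAux

open LinearMap Submodule Module

variable {F V W : Type*} [Field F] [AddCommGroup V] [Module F V]
  [AddCommGroup W] [Module F W]

/-- Construction: if `c` maps `ker b` into `range a`, we can solve `a∘x - y∘b = c`. -/
theorem roth_solve (a : V →ₗ[F] V) (b : W →ₗ[F] W) (c : W →ₗ[F] V)
    (h : LinearMap.ker b ≤ Submodule.comap c (LinearMap.range a)) :
    ∃ x y : W →ₗ[F] V, a ∘ₗ x - y ∘ₗ b = c := by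
  obtain ⟨K', hK⟩ := Submodule.exists_isCompl (LinearMap.ker b)
  obtain ⟨σ, hσ⟩ := a.rangeRestrict.exists_rightInverse_of_surjective
    (by rw [LinearMap.range_rangeRestrict])
  set c' : LinearMap.ker b →ₗ[F] LinearMap.range a :=
    LinearMap.codRestrict _ (c ∘ₗ (LinearMap.ker b).subtype) (fun v => h v.2) with hc'
  set x : W →ₗ[F] V :=
    σ ∘ₗ c' ∘ₗ (LinearMap.ker b).linearProjOfIsCompl K' hK with hx
  have hax : ∀ v : W, v ∈ LinearMap.ker b → a (x v) = c v := by
    intro v hv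
    have hproj : (LinearMap.ker b).linearProjOfIsCompl K' hK v = ⟨v, hv⟩ := by
      exact Submodule.linearProjOfIsCompl_apply_left hK ⟨v, hv⟩
    have key : ∀ z : LinearMap.range a, a (σ z) = (z : V) := by
      intro z
      have h1 := congrArg (fun f => f z) hσ
      have h2 : a.rangeRestrict (σ z) = z := h1
      have := congrArg Subtype.val h2
      simpa using this
    simp only [hx, LinearMap.comp_apply, hproj]
    rw [key]
    simp [hc']
  set g : W →ₗ[F] V := a ∘ₗ x - c with hg
  have hgker : LinearMap.ker b ≤ LinearMap.ker g := by
    intro v hv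
    simp [hg, hax v hv]
  obtain ⟨τ, hτ⟩ := b.rangeRestrict.exists_rightInverse_of_surjective
    (by rw [LinearMap.range_rangeRestrict])
  obtain ⟨R', hR⟩ := Submodule.exists_isCompl (LinearMap.range b)
  set y : W →ₗ[F] V := g ∘ₗ τ ∘ₗ (LinearMap.range b).projectionOnto R' hR with hy
  refine ⟨x, y, ?_⟩
  have hyb : y ∘ₗ b = g := by
    ext v
    have hproj : (LinearMap.range b).projectionOnto R' hR (b v) = b.rangeRestrict v := by
      simpa using Submodule.linearProjOfIsCompl_apply_left hR (b.rangeRestrict v)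
    have hbr : b.rangeRestrict (τ (b.rangeRestrict v)) = b.rangeRestrict v := by
      have := congrArg (fun f => f (b.rangeRestrict v)) hτ
      exact this
    have hbv : b (τ (b.rangeRestrict v)) = b v := congrArg Subtype.val hbr
    have hkerdiff : τ (b.rangeRestrict v) - v ∈ LinearMap.ker b := by
      simp [LinearMap.mem_ker, map_sub, hbv]
    have hgdiff : g (τ (b.rangeRestrict v)) = g v := by
      have := hgker hkerdiff
      rw [LinearMap.mem_ker, map_sub, sub_eq_zero] at this
      exact this
    simp [hy, hproj, hgdiff]
  rw [hyb, hg]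
  abel


/-- Kernel dimension of `(u,v) ↦ (a u + c v, b v)`. -/
theorem roth_ker_count [FiniteDimensional F V] [FiniteDimensional F W]
    (a : V →ₗ[F] V) (b : W →ₗ[F] W) (c : W →ₗ[F] V) :
    finrank F (LinearMap.ker ((a.coprod c).prod (b ∘ₗ LinearMap.snd F V W)))
      = finrank F (LinearMap.ker a)
        + finrank F (LinearMap.ker b ⊓ Submodule.comap c (LinearMap.range a) : Submodule F W) := by
  set f : V × W →ₗ[F] V × W := (a.coprod c).prod (b ∘ₗ LinearMap.snd F V W) with hf
  have hmem : ∀ p : V × W, p ∈ LinearMap.ker f ↔ a p.1 + c p.2 = 0 ∧ b p.2 = 0 := by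
    intro p
    simp [hf, LinearMap.mem_ker, Prod.ext_iff]
  set π : LinearMap.ker f →ₗ[F] W := (LinearMap.snd F V W).domRestrict (LinearMap.ker f) with hπ
  have hrange : LinearMap.range π
      = LinearMap.ker b ⊓ Submodule.comap c (LinearMap.range a) := by
    ext v
    constructor
    · rintro ⟨⟨p, hp⟩, rfl⟩
      obtain ⟨h1, h2⟩ := (hmem p).1 hp
      refine ⟨h2, ⟨-p.1, ?_⟩⟩
      have hcp : c p.2 = -(a p.1) := eq_neg_of_add_eq_zero_right h1
      have hπp : π ⟨p, hp⟩ = p.2 := rfl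
      rw [map_neg, hπp, hcp]
    · rintro ⟨hv1, u, hv2⟩
      refine ⟨⟨(-u, v), (hmem (-u, v)).2 ⟨?_, hv1⟩⟩, rfl⟩
      simp [hv2]
  have hker : finrank F (LinearMap.ker π) = finrank F (LinearMap.ker a) := by
    have hφmem : ∀ u : LinearMap.ker a, ((u : V), (0 : W)) ∈ LinearMap.ker f := by
      intro u
      exact (hmem _).2 ⟨by simp [u.2.out], by simp⟩
    set φ₁ : LinearMap.ker a →ₗ[F] LinearMap.ker f :=
      LinearMap.codRestrict _ ((LinearMap.inl F V W) ∘ₗ (LinearMap.ker a).subtype)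
        (fun u => hφmem u) with hφ₁
    have hφπ : ∀ u, φ₁ u ∈ LinearMap.ker π := by
      intro u
      simp [hπ, hφ₁, LinearMap.mem_ker]
      rfl
    set φ₂ : LinearMap.ker a →ₗ[F] LinearMap.ker π :=
      LinearMap.codRestrict _ φ₁ hφπ with hφ₂
    have hbij : Function.Bijective φ₂ := by
      constructor
      · intro u₁ u₂ h12
        have : ((φ₂ u₁ : LinearMap.ker f) : V × W).1 = ((φ₂ u₂ : LinearMap.ker f) : V × W).1 := by
          rw [h12]
        exact Subtype.ext this
      · rintro ⟨⟨p, hp⟩, hz⟩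
        have hp2 : p.2 = 0 := hz
        have hp1 : a p.1 = 0 := by
          have := ((hmem p).1 hp).1
          rwa [hp2, map_zero, add_zero] at this
        refine ⟨⟨p.1, hp1⟩, ?_⟩
        apply Subtype.ext
        apply Subtype.ext
        simp [hφ₂, hφ₁]
        exact (Prod.ext_iff.2 ⟨rfl, hp2.symm⟩ : (p.1, (0:W)) = p)
    exact (LinearEquiv.ofBijective φ₂ hbij).finrank_eq.symm
  have := LinearMap.finrank_range_add_finrank_ker π
  rw [hrange, hker] at this
  have hfin : finrank F (LinearMap.ker f)
      = finrank F (LinearMap.ker b ⊓ Submodule.comap c (LinearMap.range a) : Submodule F W)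
        + finrank F (LinearMap.ker a) := this.symm
  omega


theorem roth_key [FiniteDimensional F V] [FiniteDimensional F W]
    (a : V →ₗ[F] V) (b : W →ₗ[F] W) (c : W →ₗ[F] V)
    (h : finrank F (LinearMap.range ((a.coprod c).prod (b ∘ₗ LinearMap.snd F V W)))
      = finrank F (LinearMap.range ((a.coprod (0 : W →ₗ[F] V)).prod (b ∘ₗ LinearMap.snd F V W)))) :
    LinearMap.ker b ≤ Submodule.comap c (LinearMap.range a) := by
  set fc := (a.coprod c).prod (b ∘ₗ LinearMap.snd F V W) with hfc
  set f0 := (a.coprod (0 : W →ₗ[F] V)).prod (b ∘ₗ LinearMap.snd F V W) with hf0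
  have e1 := LinearMap.finrank_range_add_finrank_ker fc
  have e2 := LinearMap.finrank_range_add_finrank_ker f0
  have hkereq : finrank F (LinearMap.ker fc) = finrank F (LinearMap.ker f0) := by omega
  have k1 := roth_ker_count a b c
  have k2 := roth_ker_count a b (0 : W →ₗ[F] V)
  rw [← hfc] at k1
  rw [← hf0] at k2
  have hc0 : Submodule.comap (0 : W →ₗ[F] V) (LinearMap.range a) = ⊤ := by
    ext v; simp
  rw [hc0, inf_top_eq] at k2
  have hfr : finrank F (LinearMap.ker b ⊓ Submodule.comap c (LinearMap.range a) : Submodule F W)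
      = finrank F (LinearMap.ker b) := by omega
  have heq := Submodule.eq_of_le_of_finrank_eq inf_le_left hfr
  rw [← heq]
  exact inf_le_right

end RothAux

section RothMatrix

open LinearMap Submodule Module

variable {F : Type*} [Field F]

theorem roth_rank_mul {ι : Type*} [Fintype ι] [DecidableEq ι]
    (P M Q : Matrix ι ι F) (hP : IsUnit P) (hQ : IsUnit Q) :
    finrank F (LinearMap.range (Matrix.toLin' (P * M * Q)))
      = finrank F (LinearMap.range (Matrix.toLin' M)) := by
  rcases hP with ⟨uP, rfl⟩
  rcases hQ with ⟨uQ, rfl⟩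
  have hQtop : LinearMap.range (Matrix.toLin' (↑uQ : Matrix ι ι F)) = ⊤ := by
    rw [LinearMap.range_eq_top]
    intro v
    refine ⟨Matrix.toLin' (↑uQ⁻¹ : Matrix ι ι F) v, ?_⟩
    rw [← Matrix.toLin'_mul_apply, Units.mul_inv, Matrix.toLin'_one, LinearMap.id_apply]
  have hPinj : Function.Injective (Matrix.toLin' (↑uP : Matrix ι ι F)) := by
    intro v w hvw
    have := congrArg (Matrix.toLin' (↑uP⁻¹ : Matrix ι ι F)) hvw
    rwa [← Matrix.toLin'_mul_apply, ← Matrix.toLin'_mul_apply, Units.inv_mul,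
      Matrix.toLin'_one, LinearMap.id_apply, LinearMap.id_apply] at this
  have hsplit : Matrix.toLin' ((↑uP : Matrix ι ι F) * M * (↑uQ : Matrix ι ι F))
      = Matrix.toLin' (↑uP : Matrix ι ι F)
        ∘ₗ (Matrix.toLin' M ∘ₗ Matrix.toLin' (↑uQ : Matrix ι ι F)) := by
    rw [Matrix.toLin'_mul, Matrix.toLin'_mul, LinearMap.comp_assoc]
  rw [hsplit, LinearMap.range_comp, LinearMap.range_comp_of_range_eq_top _ hQtop]
  exact ((Submodule.equivMapOfInjective _ hPinj _).finrank_eq).symm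

theorem roth_block_rank {n m : ℕ} (A : Matrix (Fin n) (Fin n) F)
    (B : Matrix (Fin m) (Fin m) F) (C : Matrix (Fin n) (Fin m) F) :
    finrank F (LinearMap.range (Matrix.toLin' (fromBlocks A C 0 B)))
      = finrank F (LinearMap.range (((Matrix.toLin' A).coprod (Matrix.toLin' C)).prod
          ((Matrix.toLin' B) ∘ₗ LinearMap.snd F (Fin n → F) (Fin m → F)))) := by
  set e := LinearEquiv.sumArrowLequivProdArrow (Fin n) (Fin m) F F with he
  set T := Matrix.toLin' (fromBlocks A C 0 B) with hT
  set f := ((Matrix.toLin' A).coprod (Matrix.toLin' C)).prod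
    ((Matrix.toLin' B) ∘ₗ LinearMap.snd F (Fin n → F) (Fin m → F)) with hfdef
  have hcomp : f = e.toLinearMap ∘ₗ T ∘ₗ e.symm.toLinearMap := by
    apply LinearMap.ext
    intro x
    have hs : (e.symm x : (Fin n ⊕ Fin m) → F) = Sum.elim x.1 x.2 := by
      funext i
      cases i <;>
        simp [he, LinearEquiv.sumArrowLequivProdArrow, Equiv.sumArrowEquivProdArrow]
    simp only [LinearMap.comp_apply, LinearEquiv.coe_coe, hs, hT]
    rw [Matrix.toLin'_apply, Matrix.fromBlocks_mulVec]
    refine Prod.ext ?_ ?_ <;> funext j <;>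
      simp [he, hfdef, LinearEquiv.sumArrowLequivProdArrow, Matrix.toLin'_apply,
        Matrix.zero_mulVec]
  have h2 : LinearMap.range (T ∘ₗ e.symm.toLinearMap) = LinearMap.range T :=
    LinearMap.range_comp_of_range_eq_top _ (LinearEquiv.range e.symm)
  rw [hcomp, LinearMap.range_comp, h2, LinearEquiv.finrank_map_eq]

end RothMatrix

/-- Roth's equivalence theorem: `AX - YB = C` has a solution iff
`[[A,C],[0,B]]` and `[[A,0],[0,B]]` are equivalent. -/
theorem roth_equivalence {F : Type*} [Field F] {n m : ℕ}
    (A : Matrix (Fin n) (Fin n) F) (B : Matrix (Fin m) (Fin m) F)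
    (C : Matrix (Fin n) (Fin m) F) :
    (∃ X Y : Matrix (Fin n) (Fin m) F, A * X - Y * B = C) ↔
      ∃ P Q : Matrix (Fin n ⊕ Fin m) (Fin n ⊕ Fin m) F, IsUnit P ∧ IsUnit Q ∧
        P * fromBlocks A C 0 B * Q = fromBlocks A 0 0 B := by
  constructor
  · rintro ⟨X, Y, hXY⟩
    refine ⟨fromBlocks 1 Y 0 1, fromBlocks 1 (-X) 0 1, ?_, ?_, ?_⟩
    · rw [Matrix.isUnit_iff_isUnit_det, Matrix.det_fromBlocks_zero₂₁]; simp
    · rw [Matrix.isUnit_iff_isUnit_det, Matrix.det_fromBlocks_zero₂₁]; simp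
    · simp only [Matrix.fromBlocks_multiply, Matrix.one_mul, Matrix.mul_one, Matrix.mul_zero,
        Matrix.zero_mul, add_zero, zero_add, Matrix.mul_neg, neg_zero]
      rw [show -(A * X) + (C + Y * B) = 0 from by rw [← hXY]; abel]
  · rintro ⟨P, Q, hP, hQ, hPQ⟩
    have hrank := roth_rank_mul P (fromBlocks A C 0 B) Q hP hQ
    rw [hPQ] at hrank
    have hb1 := roth_block_rank A B C
    have hb0 := roth_block_rank A B (0 : Matrix (Fin n) (Fin m) F)
    rw [map_zero Matrix.toLin'] at hb0
    have hkey : LinearMap.ker (Matrix.toLin' B)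
        ≤ Submodule.comap (Matrix.toLin' C) (LinearMap.range (Matrix.toLin' A)) := by
      apply roth_key
      rw [← hb1, ← hb0]
      exact hrank.symm ▸ rfl
    obtain ⟨x, y, hxy⟩ := roth_solve (Matrix.toLin' A) (Matrix.toLin' B) (Matrix.toLin' C) hkey
    refine ⟨LinearMap.toMatrix' x, LinearMap.toMatrix' y, ?_⟩
    apply Matrix.toLin'.injective
    rw [map_sub, Matrix.toLin'_mul, Matrix.toLin'_mul, Matrix.toLin'_toMatrix',
      Matrix.toLin'_toMatrix']
    exact hxy
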